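/- Let G act on an algebra A, and let 𝒞 be an algebra equipped with a G-action and a G-grading such that ᵍc ∈ 𝒞_{ghg⁻¹} for c ∈ 𝒞_h (a G-graded G-acted algebra). Then 𝒞^{⊗n} is a (G ≀ S_n)-acted G^n-graded algebra, where ^{((g_1,...,g_n),σ)}(c_1⊗...⊗c_n) := (^{g_1}c_{σ⁻¹(1)}) ⊗ ... ⊗ (^{g_n}c_{σ⁻¹(n)}); in particular this formula defines a group action of G ≀ S_n by algebra automorphisms on 𝒞^{⊗n}. -/

import Mathlib

open scoped TensorProduct

/-- `S_n` acting on `G^n` by permuting coordinates. -/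
def permAut (G : Type*) [Group G] (n : ℕ) :
    Equiv.Perm (Fin n) →* MulAut (Fin n → G) where
  toFun σ :=
    { toFun := fun g i => g (σ⁻¹ i)
      invFun := fun g i => g (σ i)
      left_inv := fun g => by funext i; simp
      right_inv := fun g => by funext i; simp
      map_mul' := fun g h => rfl }
  map_one' := by ext g i; rfl
  map_mul' σ τ := by
    ext g i
    simp [MulAut.mul_apply, Equiv.Perm.mul_apply]

/-- The wreath product `G ≀ S_n = G^n ⋊ S_n`. -/
abbrev Wr (G : Type*) [Group G] (n : ℕ) :=
  SemidirectProduct (Fin n → G) (Equiv.Perm (Fin n)) (permAut G n)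

/-- the `(h_1,…,h_n)`-component `𝒞_{h_1} ⊗ … ⊗ 𝒞_{h_n}` of the `G^n`-grading on
`𝒞^{⊗n}`. -/
noncomputable def tensComp {𝒪 𝒞 G : Type*} [CommRing 𝒪] [Ring 𝒞] [Algebra 𝒪 𝒞]
    [Group G] {n : ℕ} (𝒢 : G → Submodule 𝒪 𝒞) (h : Fin n → G) :
    Submodule 𝒪 (⨂[𝒪] _ : Fin n, 𝒞) :=
  Submodule.span 𝒪
    {t | ∃ c : Fin n → 𝒞, (∀ i, c i ∈ 𝒢 (h i)) ∧ t = PiTensorProduct.tprod 𝒪 c}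

noncomputable section WrAux

variable {𝒪 𝒞 G : Type*} [CommRing 𝒪] [Ring 𝒞] [Algebra 𝒪 𝒞] [Group G] {n : ℕ}

/-- The multilinear map underlying the action of `x : G ≀ S_n` on `𝒞^{⊗n}`. -/
def wrMul (φ : G →* (𝒞 ≃ₐ[𝒪] 𝒞)) (x : Wr G n) :
    MultilinearMap 𝒪 (fun _ : Fin n => 𝒞) (⨂[𝒪] _ : Fin n, 𝒞) :=
  MultilinearMap.domDomCongr (x.right⁻¹ : Equiv.Perm (Fin n))
    ((PiTensorProduct.tprod 𝒪).compLinearMap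
      (fun i => (φ (x.left i)).toLinearMap))

lemma wrMul_apply (φ : G →* (𝒞 ≃ₐ[𝒪] 𝒞)) (x : Wr G n) (c : Fin n → 𝒞) :
    wrMul φ x c = PiTensorProduct.tprod 𝒪
      (fun i => φ (x.left i) (c (x.right⁻¹ i))) := rfl

/-- The algebra homomorphism given by `x : G ≀ S_n` on `𝒞^{⊗n}`. -/
def wrHom (φ : G →* (𝒞 ≃ₐ[𝒪] 𝒞)) (x : Wr G n) :
    (⨂[𝒪] _ : Fin n, 𝒞) →ₐ[𝒪] (⨂[𝒪] _ : Fin n, 𝒞) :=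
  PiTensorProduct.liftAlgHom (wrMul φ x)
    (by
      rw [PiTensorProduct.one_def, wrMul_apply]
      congr 1
      funext i
      simp)
    (by
      intro c d
      have h1 : (fun i => φ (x.left i) ((c * d) (x.right⁻¹ i))) =
          (fun i => φ (x.left i) (c (x.right⁻¹ i))) *
          (fun i => φ (x.left i) (d (x.right⁻¹ i))) := by
        funext i; simp [Pi.mul_apply]
      simp only [wrMul_apply, h1]
      exact map_mul (PiTensorProduct.tprodMonoidHom 𝒪) _ _)

lemma wrHom_tprod (φ : G →* (𝒞 ≃ₐ[𝒪] 𝒞)) (x : Wr G n) (c : Fin n → 𝒞) :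
    wrHom φ x (PiTensorProduct.tprod 𝒪 c) = PiTensorProduct.tprod 𝒪
      (fun i => φ (x.left i) (c (x.right⁻¹ i))) := by
  simp [wrHom, PiTensorProduct.liftAlgHom, wrMul_apply]

lemma wrHom_one (φ : G →* (𝒞 ≃ₐ[𝒪] 𝒞)) :
    wrHom (n := n) φ 1 = AlgHom.id 𝒪 _ := by
  apply AlgHom.toLinearMap_injective
  apply PiTensorProduct.ext
  ext c
  simp only [LinearMap.compMultilinearMap_apply, AlgHom.toLinearMap_apply, wrHom_tprod,
    AlgHom.coe_id, id_eq, LinearMap.id_coe]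
  congr 1
  funext i
  rw [show (1 : Wr G n).left = 1 from rfl, show (1 : Wr G n).right = 1 from rfl,
    inv_one, Pi.one_apply, map_one]
  rfl

lemma wrHom_mul (φ : G →* (𝒞 ≃ₐ[𝒪] 𝒞)) (x y : Wr G n) :
    (wrHom φ x).comp (wrHom φ y) = wrHom φ (x * y) := by
  apply AlgHom.toLinearMap_injective
  apply PiTensorProduct.ext
  ext c
  simp only [LinearMap.compMultilinearMap_apply, AlgHom.comp_toLinearMap,
    LinearMap.coe_comp, Function.comp_apply, AlgHom.toLinearMap_apply, wrHom_tprod]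
  congr 1
  funext i
  have hl : (x * y).left i = x.left i * y.left (x.right⁻¹ i) := by
    simp [SemidirectProduct.mul_left, permAut]
  have hr : ((x * y).right⁻¹ : Equiv.Perm (Fin n)) i = y.right⁻¹ (x.right⁻¹ i) := by
    simp [SemidirectProduct.mul_right]
  rw [hl, hr, map_mul]
  rfl

/-- The algebra automorphism given by `x : G ≀ S_n` on `𝒞^{⊗n}`. -/
def wrEquiv (φ : G →* (𝒞 ≃ₐ[𝒪] 𝒞)) (x : Wr G n) :
    (⨂[𝒪] _ : Fin n, 𝒞) ≃ₐ[𝒪] (⨂[𝒪] _ : Fin n, 𝒞) :=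
  AlgEquiv.ofAlgHom (wrHom φ x) (wrHom φ x⁻¹)
    (by rw [wrHom_mul, mul_inv_cancel, wrHom_one])
    (by rw [wrHom_mul, inv_mul_cancel, wrHom_one])

/-- The monoid homomorphism `G ≀ S_n → Aut(𝒞^{⊗n})`. -/
def wrMonoidHom (φ : G →* (𝒞 ≃ₐ[𝒪] 𝒞)) :
    Wr G n →* ((⨂[𝒪] _ : Fin n, 𝒞) ≃ₐ[𝒪] (⨂[𝒪] _ : Fin n, 𝒞)) where
  toFun := wrEquiv φ
  map_one' := by
    ext t
    show wrHom φ 1 t = t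
    rw [wrHom_one]; rfl
  map_mul' x y := by
    ext t
    show wrHom φ (x * y) t = wrHom φ x (wrHom φ y t)
    rw [← wrHom_mul]; rfl

end WrAux

/-- if `𝒞` is a `G`-graded `G`-acted algebra then `𝒞^{⊗n}` is a
`(G ≀ S_n)`-acted, `G^n`-graded algebra, via
`^{((g_1,…,g_n),σ)}(c_1⊗…⊗c_n) = (^{g_1}c_{σ⁻¹(1)}) ⊗ … ⊗ (^{g_n}c_{σ⁻¹(n)})`. -/
theorem tensor_power_wreath_acted_graded (𝒪 𝒞 G : Type*) [CommRing 𝒪] [Ring 𝒞]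
    [Algebra 𝒪 𝒞] [Group G] [Finite G] (n : ℕ) (hn : 0 < n)
    (φ : G →* (𝒞 ≃ₐ[𝒪] 𝒞)) (𝒢 : G → Submodule 𝒪 𝒞)
    (hcompat : ∀ (g h : G), ∀ c ∈ 𝒢 h, φ g c ∈ 𝒢 (g * h * g⁻¹)) :
    ∃ Φ : Wr G n →* ((⨂[𝒪] _ : Fin n, 𝒞) ≃ₐ[𝒪] (⨂[𝒪] _ : Fin n, 𝒞)),
      (∀ (x : Wr G n) (c : Fin n → 𝒞),
        Φ x (PiTensorProduct.tprod 𝒪 c) =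
          PiTensorProduct.tprod 𝒪 (fun i => φ (x.left i) (c (x.right⁻¹ i)))) ∧
      (∀ (x : Wr G n) (h : Fin n → G),
        Submodule.map (Φ x).toLinearMap (tensComp 𝒢 h) ≤
          tensComp 𝒢 (x * SemidirectProduct.inl h * x⁻¹).left) := by
  refine ⟨wrMonoidHom φ, fun x c => wrHom_tprod φ x c, fun x h => ?_⟩
  have hleft : ∀ i, (x * SemidirectProduct.inl h * x⁻¹).left i =
      x.left i * h (x.right⁻¹ i) * (x.left i)⁻¹ := by
    intro i
    rw [SemidirectProduct.mul_left, SemidirectProduct.mul_left, SemidirectProduct.mul_right,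
      SemidirectProduct.inv_left, SemidirectProduct.left_inl, SemidirectProduct.right_inl]
    simp [permAut, Equiv.Perm.inv_def]
  rw [tensComp, Submodule.map_span, Submodule.span_le]
  rintro _ ⟨t, ⟨c, hc, rfl⟩, rfl⟩
  apply Submodule.subset_span
  refine ⟨fun i => φ (x.left i) (c (x.right⁻¹ i)), fun i => ?_, ?_⟩
  · rw [hleft i]
    exact hcompat _ _ _ (hc _)
  · exact wrHom_tprod φ x c
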